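/- Reduced-solution formula: Under the assumptions that Â is full column rank, [Ĉ D̂] full column rank, and ÂᵀÎÂ invertible, the minimizer over the variational subspace {N̂Ẑ + ÛD̂Ŷ} of (1/2)X̂ᵀX̂ − q̂ᵀX̂ subject to ÂᵀX̂ = b̂ is X̂*_min = Î(q̂ − ÂΛ*) with Λ* = (ÂᵀÎÂ)⁻¹(ÂᵀÎq̂ − b̂), which equals (Î − Â_pÂ_p⁺)q̂ + (Â_p⁺)ᵀb̂. -/

import Mathlib

open Matrix Module

lemma aux_ker_of_rank {p : ℕ} {ι : Type*} [Fintype ι] [DecidableEq ι]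
    (M : Matrix (Fin p) ι ℝ)
    (h : M.rank = Fintype.card ι) : ∀ v, M *ᵥ v = 0 → v = 0 := by
  intro v hv
  have h1 := LinearMap.finrank_range_add_finrank_ker M.mulVecLin
  rw [Module.finrank_fintype_fun_eq_card] at h1
  rw [Matrix.rank] at h
  rw [h] at h1
  have hker : LinearMap.ker M.mulVecLin = ⊥ :=
    Submodule.finrank_eq_zero.mp (by omega)
  have : v ∈ LinearMap.ker M.mulVecLin := by
    simp [LinearMap.mem_ker, Matrix.mulVecLin_apply, hv]
  rw [hker] at this
  simpa using this

lemma aux_isUnit_transpose_mul_self {p q : ℕ} (B : Matrix (Fin p) (Fin q) ℝ)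
    (h : ∀ v, B *ᵥ v = 0 → v = 0) : IsUnit (Bᵀ * B) := by
  rw [← Matrix.mulVec_injective_iff_isUnit]
  intro x y hxy
  have hz : (Bᵀ * B) *ᵥ (x - y) = 0 := by
    rw [Matrix.mulVec_sub, hxy, sub_self]
  have hB : B *ᵥ (x - y) = 0 := by
    have := (Matrix.conjTranspose_mul_self_mulVec_eq_zero B (x - y)).mp ?_
    · exact this
    · simpa [Matrix.conjTranspose_eq_transpose_of_trivial] using hz
  exact sub_eq_zero.mp (h _ hB)

lemma aux_dot {p r : ℕ} (M : Matrix (Fin p) (Fin r) ℝ) (x : Fin r → ℝ) (y : Fin p → ℝ) :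
    (M *ᵥ x) ⬝ᵥ y = x ⬝ᵥ (Mᵀ *ᵥ y) := by
  rw [Matrix.dotProduct_mulVec, Matrix.vecMul_transpose]

/-- Reduced-solution formula. The minimizer of the quadratic
program over the variational subspace `{N̂Ẑ + ÛD̂Ŷ}` subject to `ÂᵀX̂ = b̂`
is `X̂*_min = Î(q̂ − ÂΛ*)` with `Λ* = (ÂᵀÎÂ)⁻¹(ÂᵀÎq̂ − b̂)`, which equals
`(Î − Â_pÂ_p⁺)q̂ + (Â_p⁺)ᵀb̂`. -/
theorem reduced_solution_formula
    (n d k m : ℕ) (C : Matrix (Fin n) (Fin d) ℝ) (D : Matrix (Fin n) (Fin k) ℝ)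
    (A : Matrix (Fin n) (Fin m) ℝ)
    (q : Fin n → ℝ) (b : Fin m → ℝ)
    (hrank : (Matrix.fromCols C D).rank = d + k)
    (hArank : A.rank = m) :
    let Cp : Matrix (Fin d) (Fin n) ℝ := (Cᵀ * C)⁻¹ * Cᵀ
    let U : Matrix (Fin n) (Fin n) ℝ := 1 - C * Cp
    let N : Matrix (Fin n) (Fin d) ℝ := Cpᵀ
    let UDp : Matrix (Fin k) (Fin n) ℝ := (Dᵀ * U * D)⁻¹ * Dᵀ * Uᵀ
    let Ihat : Matrix (Fin n) (Fin n) ℝ := U * D * UDp + C * Cp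
    let App : Matrix (Fin n) (Fin m) ℝ := Ihat * A
    let Appp : Matrix (Fin m) (Fin n) ℝ := (Appᵀ * App)⁻¹ * Appᵀ
    let Λs : Fin m → ℝ := (Aᵀ * Ihat * A)⁻¹ *ᵥ ((Aᵀ * Ihat) *ᵥ q - b)
    let Xs : Fin n → ℝ := Ihat *ᵥ (q - A *ᵥ Λs)
    let f : (Fin n → ℝ) → ℝ := fun X => (1 / 2) * (X ⬝ᵥ X) - q ⬝ᵥ X
    IsUnit (Aᵀ * Ihat * A) →
      Xs = (Ihat - App * Appp) *ᵥ q + Apppᵀ *ᵥ b ∧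
      (∃ (Z : Fin d → ℝ) (Y : Fin k → ℝ), Xs = N *ᵥ Z + (U * D) *ᵥ Y) ∧
      Aᵀ *ᵥ Xs = b ∧
      ∀ (Z : Fin d → ℝ) (Y : Fin k → ℝ),
        Aᵀ *ᵥ (N *ᵥ Z + (U * D) *ᵥ Y) = b →
          f Xs ≤ f (N *ᵥ Z + (U * D) *ᵥ Y) := by
  intro Cp U N UDp Ihat App Appp Λs Xs f hU
  have hCp : Cp = (Cᵀ * C)⁻¹ * Cᵀ := rfl
  have hUdef : U = 1 - C * Cp := rfl
  have hNdef : N = Cpᵀ := rfl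
  have hUDp : UDp = (Dᵀ * U * D)⁻¹ * Dᵀ * Uᵀ := rfl
  have hIdef : Ihat = U * D * UDp + C * Cp := rfl
  have hApp : App = Ihat * A := rfl
  have hAppp : Appp = (Appᵀ * App)⁻¹ * Appᵀ := rfl
  have hΛs : Λs = (Aᵀ * Ihat * A)⁻¹ *ᵥ ((Aᵀ * Ihat) *ᵥ q - b) := rfl
  have hXs : Xs = Ihat *ᵥ (q - A *ᵥ Λs) := rfl
  have hf : ∀ x, f x = (1 / 2) * (x ⬝ᵥ x) - q ⬝ᵥ x := fun _ => rfl
  -- rank consequences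
  have hFC : ∀ v, (Matrix.fromCols C D) *ᵥ v = 0 → v = 0 :=
    aux_ker_of_rank _ (by simpa using hrank)
  have hCker : ∀ v, C *ᵥ v = 0 → v = 0 := by
    intro v hv
    have := hFC (Sum.elim v 0) (by
      rw [Matrix.fromCols_mulVec_sumElim, hv, Matrix.mulVec_zero, add_zero])
    funext i
    exact congrFun this (Sum.inl i)
  have hCCunit : IsUnit (Cᵀ * C) := aux_isUnit_transpose_mul_self C hCker
  have hCCdet : IsUnit (Cᵀ * C).det := (Matrix.isUnit_iff_isUnit_det _).mp hCCunit
  have hCpC : Cp * C = 1 := by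
    rw [hCp, Matrix.mul_assoc, Matrix.nonsing_inv_mul _ hCCdet]
  have hUC : U * C = 0 := by
    rw [hUdef, Matrix.sub_mul, Matrix.one_mul, Matrix.mul_assoc, hCpC,
      Matrix.mul_one, sub_self]
  have hCtU : Cᵀ * U = 0 := by
    have h1 : Cᵀ * (C * Cp) = Cᵀ := by
      rw [hCp, ← Matrix.mul_assoc, ← Matrix.mul_assoc,
        Matrix.mul_nonsing_inv _ hCCdet, Matrix.one_mul]
    rw [hUdef, Matrix.mul_sub, Matrix.mul_one, h1, sub_self]
  have hCCp_symm : (C * Cp)ᵀ = C * Cp := by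
    rw [hCp]
    rw [Matrix.transpose_mul, Matrix.transpose_mul, Matrix.transpose_nonsing_inv,
      Matrix.transpose_mul, Matrix.transpose_transpose,
      Matrix.mul_assoc C ((Cᵀ * C)⁻¹) Cᵀ]
  have hUsymm : Uᵀ = U := by
    rw [hUdef, Matrix.transpose_sub, Matrix.transpose_one, hCCp_symm]
  have hPP : (C * Cp) * (C * Cp) = C * Cp := by
    rw [Matrix.mul_assoc, ← Matrix.mul_assoc Cp, hCpC, Matrix.one_mul]
  have hUU : U * U = U := by
    rw [hUdef, Matrix.sub_mul, Matrix.one_mul, Matrix.mul_sub, Matrix.mul_one,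
      hPP, sub_self, sub_zero]
  have hCpU : Cp * U = 0 := by
    rw [hCp, Matrix.mul_assoc, hCtU, Matrix.mul_zero]
  -- U*D full column rank
  have hUDker : ∀ v, (U * D) *ᵥ v = 0 → v = 0 := by
    intro y hy
    have hy' : D *ᵥ y - (C * Cp) *ᵥ (D *ᵥ y) = 0 := by
      have : U *ᵥ (D *ᵥ y) = 0 := by rw [Matrix.mulVec_mulVec]; exact hy
      rw [hUdef, Matrix.sub_mulVec, Matrix.one_mulVec] at this
      exact this
    have hDy : C *ᵥ (Cp *ᵥ (D *ᵥ y)) + D *ᵥ (-y) = 0 := by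
      rw [Matrix.mulVec_neg, Matrix.mulVec_mulVec (D *ᵥ y) C Cp]
      rw [sub_eq_zero] at hy'
      rw [← hy']
      abel
    have := hFC (Sum.elim (Cp *ᵥ (D *ᵥ y)) (-y)) (by
      rw [Matrix.fromCols_mulVec_sumElim]; exact hDy)
    funext i
    have := congrFun this (Sum.inr i)
    simpa [neg_eq_zero] using congrFun (funext fun j => this) i
  have hDUDunit : IsUnit (Dᵀ * U * D) := by
    have h0 := aux_isUnit_transpose_mul_self (U * D) hUDker
    have he : (U * D)ᵀ * (U * D) = Dᵀ * U * D := by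
      rw [Matrix.transpose_mul, hUsymm, Matrix.mul_assoc Dᵀ,
        ← Matrix.mul_assoc U U D, hUU, ← Matrix.mul_assoc]
    rwa [he] at h0
  have hDUDdet : IsUnit (Dᵀ * U * D).det := (Matrix.isUnit_iff_isUnit_det _).mp hDUDunit
  have hDUDsymm : (Dᵀ * U * D)ᵀ = Dᵀ * U * D := by
    rw [Matrix.transpose_mul, Matrix.transpose_mul, Matrix.transpose_transpose,
      hUsymm, Matrix.mul_assoc]
  have hUDpUD : UDp * (U * D) = 1 := by
    have h1 : UDp * (U * D) = (Dᵀ * U * D)⁻¹ * (Dᵀ * U * D) := by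
      rw [hUDp, hUsymm]
      simp only [Matrix.mul_assoc]
      rw [← Matrix.mul_assoc U U D, hUU]
    rw [h1, Matrix.nonsing_inv_mul _ hDUDdet]
  have hUDpC : UDp * C = 0 := by
    rw [hUDp, hUsymm, Matrix.mul_assoc, hUC, Matrix.mul_zero]
  have hCpUD : Cp * (U * D) = 0 := by
    rw [← Matrix.mul_assoc, hCpU, Matrix.zero_mul]
  -- Ihat facts
  have hIC : Ihat * C = C := by
    rw [hIdef, Matrix.add_mul, Matrix.mul_assoc (U * D), hUDpC, Matrix.mul_zero,
      Matrix.mul_assoc, hCpC, Matrix.mul_one, zero_add]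
  have hIUD : Ihat * (U * D) = U * D := by
    rw [hIdef, Matrix.add_mul, Matrix.mul_assoc (U * D), hUDpUD, Matrix.mul_one,
      Matrix.mul_assoc, hCpUD, Matrix.mul_zero, add_zero]
  have hUDpT : UDpᵀ = U * D * (Dᵀ * U * D)⁻¹ := by
    rw [hUDp, Matrix.transpose_mul, Matrix.transpose_mul, Matrix.transpose_transpose,
      Matrix.transpose_transpose, Matrix.transpose_nonsing_inv, hDUDsymm,
      ← Matrix.mul_assoc]
  have hIsymm : Ihatᵀ = Ihat := by
    have h1 : (U * D * UDp)ᵀ = U * D * UDp := by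
      rw [Matrix.transpose_mul, hUDpT, Matrix.transpose_mul, hUDp, hUsymm]
      simp only [Matrix.mul_assoc]
    rw [hIdef, Matrix.transpose_add, h1, hCCp_symm]
  have hII : Ihat * Ihat = Ihat := by
    calc Ihat * Ihat = Ihat * (U * D * UDp + C * Cp) := by rw [← hIdef]
      _ = (Ihat * (U * D)) * UDp + (Ihat * C) * Cp := by
          rw [Matrix.mul_add, ← Matrix.mul_assoc Ihat (U * D) UDp,
            ← Matrix.mul_assoc Ihat C Cp]
      _ = Ihat := by rw [hIUD, hIC, ← hIdef]
  have hAppTApp : Appᵀ * App = Aᵀ * Ihat * A := by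
    rw [hApp, Matrix.transpose_mul, hIsymm, Matrix.mul_assoc,
      ← Matrix.mul_assoc Ihat Ihat A, hII, ← Matrix.mul_assoc]
  have hSdet : IsUnit (Aᵀ * Ihat * A).det := (Matrix.isUnit_iff_isUnit_det _).mp hU
  have hSsymm : (Aᵀ * Ihat * A)ᵀ = Aᵀ * Ihat * A := by
    rw [Matrix.transpose_mul, Matrix.transpose_mul, Matrix.transpose_transpose,
      hIsymm, Matrix.mul_assoc]
  have hSinvT : ((Aᵀ * Ihat * A)⁻¹)ᵀ = (Aᵀ * Ihat * A)⁻¹ := by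
    rw [Matrix.transpose_nonsing_inv, hSsymm]
  have hAppp_eq : Appp = (Aᵀ * Ihat * A)⁻¹ * (Aᵀ * Ihat) := by
    rw [hAppp, hAppTApp, hApp, Matrix.transpose_mul, hIsymm]
  have hApppT : Apppᵀ = Ihat * A * (Aᵀ * Ihat * A)⁻¹ := by
    rw [hAppp_eq, Matrix.transpose_mul, Matrix.transpose_mul,
      Matrix.transpose_transpose, hIsymm, hSinvT]
  -- the constraint
  have hcon : Aᵀ *ᵥ Xs = b := by
    rw [hXs, Matrix.mulVec_mulVec, Matrix.mulVec_sub, Matrix.mulVec_mulVec, hΛs,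
      Matrix.mulVec_mulVec, Matrix.mul_nonsing_inv _ hSdet, Matrix.one_mulVec]
    abel
  -- the closed formula
  have hpart1 : Xs = (Ihat - App * Appp) *ᵥ q + Apppᵀ *ᵥ b := by
    rw [hXs, hΛs, hApppT, hAppp_eq, hApp]
    simp only [Matrix.mulVec_sub, Matrix.sub_mulVec, Matrix.mulVec_mulVec,
      Matrix.mulVec_add, ← Matrix.mul_assoc]
    abel
  -- membership in the subspace
  have hNCt : N * Cᵀ = C * Cp := by
    rw [hNdef, hCp, Matrix.transpose_mul, Matrix.transpose_transpose,
      Matrix.transpose_nonsing_inv, Matrix.transpose_mul, Matrix.transpose_transpose,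
      Matrix.mul_assoc C ((Cᵀ * C)⁻¹) Cᵀ]
  have hIsum : ∀ v : Fin n → ℝ, Ihat *ᵥ v = N *ᵥ (Cᵀ *ᵥ v) + (U * D) *ᵥ (UDp *ᵥ v) := by
    intro v
    rw [Matrix.mulVec_mulVec v N Cᵀ, Matrix.mulVec_mulVec v (U * D) UDp, hNCt, hIdef,
      Matrix.add_mulVec, add_comm]
  have hmem : Xs = N *ᵥ (Cᵀ *ᵥ (q - A *ᵥ Λs)) + (U * D) *ᵥ (UDp *ᵥ (q - A *ᵥ Λs)) := by
    rw [hXs, hIsum]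
  -- optimality
  have hNC : N = C * (Cᵀ * C)⁻¹ := by
    rw [hNdef, hCp, Matrix.transpose_mul, Matrix.transpose_transpose,
      Matrix.transpose_nonsing_inv, Matrix.transpose_mul, Matrix.transpose_transpose]
  have hIN : Ihat * N = N := by
    rw [hNC, ← Matrix.mul_assoc, hIC]
  have hIXs : Ihat *ᵥ Xs = Xs := by
    rw [hXs, Matrix.mulVec_mulVec, hII]
  refine ⟨hpart1, ⟨_, _, hmem⟩, hcon, ?_⟩
  intro Z Y hfeas
  obtain ⟨e, hWe, he⟩ :
      ∃ e, N *ᵥ Z + (U * D) *ᵥ Y = Xs + e ∧ e = N *ᵥ Z + (U * D) *ᵥ Y - Xs :=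
    ⟨_, by abel, rfl⟩
  have hIW : Ihat *ᵥ (N *ᵥ Z + (U * D) *ᵥ Y) = N *ᵥ Z + (U * D) *ᵥ Y := by
    rw [Matrix.mulVec_add, Matrix.mulVec_mulVec Z Ihat N,
      Matrix.mulVec_mulVec Y Ihat (U * D), hIN, hIUD]
  have hIe : Ihat *ᵥ e = e := by
    rw [he, Matrix.mulVec_sub, hIW, hIXs]
  have hAe : Aᵀ *ᵥ e = 0 := by
    rw [he, Matrix.mulVec_sub, hfeas, hcon, sub_self]
  have h2 : Ihat *ᵥ (Xs - q) = -((Ihat * A) *ᵥ Λs) := by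
    rw [Matrix.mulVec_sub, hIXs, hXs, Matrix.mulVec_sub, Matrix.mulVec_mulVec]
    abel
  have hkey : e ⬝ᵥ (Xs - q) = 0 := by
    have h3 : e ⬝ᵥ (Xs - q) = e ⬝ᵥ (Ihat *ᵥ (Xs - q)) := by
      conv_lhs => rw [← hIe]
      rw [aux_dot, hIsymm]
    rw [h3, h2, dotProduct_neg, dotProduct_comm, aux_dot,
      Matrix.transpose_mul, hIsymm, ← Matrix.mulVec_mulVec, hIe, hAe,
      dotProduct_zero, neg_zero]
  have hexpand : f (Xs + e) = f Xs + e ⬝ᵥ (Xs - q) + (1 / 2) * (e ⬝ᵥ e) := by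
    rw [hf, hf]
    simp only [dotProduct_add, add_dotProduct, dotProduct_sub]
    rw [dotProduct_comm e Xs, dotProduct_comm e q]
    ring
  have hpos : 0 ≤ e ⬝ᵥ e := by
    dsimp [dotProduct]
    exact Finset.sum_nonneg fun i _ => mul_self_nonneg _
  rw [hWe, hexpand, hkey, add_zero]
  linarith
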